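/- Let α ∈ (0,1], δ > 0, K > 0, and let f' : ℝ → ℝ be continuous with f'(0) = 0 and f' strictly increasing on [0,K]. Define g : [0,K] → ℝ by g(v) = ∫₀^∞ f'(((v^α − δατ)₊)^{1/α}) dτ (the integrand vanishes for τ ≥ v^α/(δα), so the integral is finite). Then g(0) = 0 and g is strictly increasing on [0,K]: for 0 ≤ v₁ < v₂ ≤ K one has g(v₁) < g(v₂). -/
import Mathlib


open Set MeasureTheory

private lemma rpow_const_cont' {c : ℝ} (hc : 0 < c) : Continuous fun x : ℝ => x ^ c := by
  rw [continuous_iff_continuousAt]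
  intro x
  exact Real.continuousAt_rpow_const x c (Or.inr hc.le)

/-- **Strict monotonicity of the traversed-distance function `g` (equation (5.16)).**
Let `α ∈ (0,1]`, `δ > 0`, `K > 0`, and let `f' : ℝ → ℝ` be continuous with `f'(0) = 0` and
`f'` strictly increasing on `[0,K]`.  Define
`g(v) = ∫₀^∞ f'(((v^α − δατ)₊)^{1/α}) dτ`.
Then `g(0) = 0` and `g` is strictly increasing on `[0,K]`. -/
theorem traversed_distance_strictMono
    (α δ K : ℝ) (hα : α ∈ Set.Ioc (0:ℝ) 1) (hδ : 0 < δ) (hK : 0 < K)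
    (fd : ℝ → ℝ) (hfd : Continuous fd) (hfd0 : fd 0 = 0)
    (hmono : StrictMonoOn fd (Set.Icc 0 K))
    (g : ℝ → ℝ)
    (hg : ∀ v, g v = ∫ τ in Set.Ioi (0:ℝ),
        fd ((max (v ^ α - δ * α * τ) 0) ^ (1/α))) :
    g 0 = 0 ∧ StrictMonoOn g (Set.Icc 0 K) := by
  obtain ⟨hα0, hα1⟩ := hα
  have hδα : 0 < δ * α := mul_pos hδ hα0
  have hinv : 0 < 1 / α := by positivity
  set F : ℝ → ℝ → ℝ := fun v τ => fd ((max (v ^ α - δ * α * τ) 0) ^ (1 / α)) with hF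
  -- vanishing when the inner term is nonpositive
  have hzero : ∀ v τ : ℝ, v ^ α - δ * α * τ ≤ 0 → F v τ = 0 := by
    intro v τ h
    simp only [hF]
    rw [max_eq_right h, Real.zero_rpow (ne_of_gt hinv), hfd0]
  -- continuity in τ
  have hFcont : ∀ v, Continuous (F v) := by
    intro v
    exact hfd.comp ((rpow_const_cont' hinv).comp
      ((continuous_const.sub (continuous_const.mul continuous_id)).max continuous_const))
  -- bounds on the inner value
  have hval : ∀ v : ℝ, 0 ≤ v → ∀ τ : ℝ, 0 ≤ τ →
      (max (v ^ α - δ * α * τ) 0) ^ (1 / α) ∈ Icc 0 v := by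
    intro v hv τ hτ
    constructor
    · exact Real.rpow_nonneg (le_max_right _ _) _
    · have h1 : max (v ^ α - δ * α * τ) 0 ≤ v ^ α := by
        rcases le_or_gt (v ^ α - δ * α * τ) 0 with h | h
        · rw [max_eq_right h]; exact Real.rpow_nonneg hv _
        · rw [max_eq_left h.le]
          nlinarith [Real.rpow_nonneg hv α, mul_nonneg hδα.le hτ]
      calc (max (v ^ α - δ * α * τ) 0) ^ (1 / α)
          ≤ (v ^ α) ^ (1 / α) :=
            Real.rpow_le_rpow (le_max_right _ _) h1 hinv.le
        _ = v := by rw [one_div, Real.rpow_rpow_inv hv (ne_of_gt hα0)]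
  -- integrability
  have hInt : ∀ v : ℝ, 0 ≤ v → IntegrableOn (F v) (Ioi 0) := by
    intro v hv
    have hT : (0:ℝ) ≤ v ^ α / (δ * α) :=
      div_nonneg (Real.rpow_nonneg hv α) hδα.le
    rw [← Set.Ioc_union_Ioi_eq_Ioi hT]
    refine IntegrableOn.union ((hFcont v).integrableOn_Ioc) ?_
    refine (integrableOn_zero).congr_fun (fun τ hτ => ?_) measurableSet_Ioi
    have hτ' : v ^ α / (δ * α) < τ := hτ
    refine (hzero v τ ?_).symm
    have := (div_lt_iff₀ hδα).mp hτ'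
    nlinarith
  constructor
  · rw [hg]
    rw [setIntegral_congr_fun measurableSet_Ioi (g := fun _ => (0:ℝ)) (fun τ hτ => ?_)]
    · exact integral_zero _ _
    · refine hzero 0 τ ?_
      have hτ0 : (0:ℝ) < τ := hτ
      rw [Real.zero_rpow (ne_of_gt hα0)]
      nlinarith
  · intro v₁ hv₁ v₂ hv₂ h12
    rw [hg, hg]
    have hv₂0 : 0 < v₂ := lt_of_le_of_lt hv₁.1 h12
    -- pointwise comparison
    have hle : ∀ τ ∈ Ioi (0:ℝ), F v₁ τ ≤ F v₂ τ := by
      intro τ hτm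
      have hτ' : (0:ℝ) < τ := hτm
      have hx : max (v₁ ^ α - δ * α * τ) 0 ≤ max (v₂ ^ α - δ * α * τ) 0 :=
        max_le_max (sub_le_sub_right (Real.rpow_le_rpow hv₁.1 h12.le hα0.le) _) le_rfl
      have hy : (max (v₁ ^ α - δ * α * τ) 0) ^ (1 / α)
          ≤ (max (v₂ ^ α - δ * α * τ) 0) ^ (1 / α) :=
        Real.rpow_le_rpow (le_max_right _ _) hx hinv.le
      have h1 := hval v₁ hv₁.1 τ (le_of_lt hτ')
      have h2 := hval v₂ hv₂.1 τ (le_of_lt hτ')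
      exact hmono.monotoneOn ⟨h1.1, h1.2.trans hv₁.2⟩ ⟨h2.1, h2.2.trans hv₂.2⟩ hy
    -- strict comparison on an interval
    set T : ℝ := v₂ ^ α / (δ * α) with hTdef
    have hT0 : 0 < T := div_pos (Real.rpow_pos_of_pos hv₂0 α) hδα
    have hlt : ∀ τ ∈ Ioo (0:ℝ) T, F v₁ τ < F v₂ τ := by
      intro τ hτ
      have hpos : 0 < v₂ ^ α - δ * α * τ := by
        have := (lt_div_iff₀ hδα).mp hτ.2
        nlinarith
      have hx : max (v₁ ^ α - δ * α * τ) 0 < max (v₂ ^ α - δ * α * τ) 0 := by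
        rw [max_eq_left hpos.le, max_lt_iff]
        exact ⟨sub_lt_sub_right (Real.rpow_lt_rpow hv₁.1 h12 hα0) _, hpos⟩
      have hy : (max (v₁ ^ α - δ * α * τ) 0) ^ (1 / α)
          < (max (v₂ ^ α - δ * α * τ) 0) ^ (1 / α) :=
        Real.rpow_lt_rpow (le_max_right _ _) hx hinv
      have h1 := hval v₁ hv₁.1 τ hτ.1.le
      have h2 := hval v₂ hv₂.1 τ hτ.1.le
      exact hmono ⟨h1.1, h1.2.trans hv₁.2⟩ ⟨h2.1, h2.2.trans hv₂.2⟩ hy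
    have hI1 := hInt v₁ hv₁.1
    have hI2 := hInt v₂ hv₂.1
    have hsub : IntegrableOn (fun τ => F v₂ τ - F v₁ τ) (Ioi 0) := hI2.sub hI1
    have hpos : 0 < ∫ τ in Ioi (0:ℝ), (F v₂ τ - F v₁ τ) := by
      rw [setIntegral_pos_iff_support_of_nonneg_ae
        (ae_restrict_of_forall_mem measurableSet_Ioi
          (fun τ hτ => sub_nonneg.mpr (hle τ hτ))) hsub]
      refine lt_of_lt_of_le ?_ (measure_mono (?_ : Ioo 0 T ⊆ _))
      · rw [Real.volume_Ioo]
        simpa using hT0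
      · intro τ hτ
        exact ⟨ne_of_gt (sub_pos.mpr (hlt τ hτ)), hτ.1⟩
    have heq : ∫ τ in Ioi (0:ℝ), (F v₂ τ - F v₁ τ)
        = (∫ τ in Ioi (0:ℝ), F v₂ τ) - ∫ τ in Ioi (0:ℝ), F v₁ τ :=
      integral_sub hI2 hI1
    rw [heq] at hpos
    linarith
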